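/- Let q be a quadratic form over a field k of characteristic ≠ 2 and let E/k be a finite field extension of odd degree. Then q is isotropic over E if and only if q is isotropic over k. -/

import Mathlib

open Polynomial Finset Module IntermediateField

theorem oddFactor {K : Type*} [Field K] :
    ∀ (n : ℕ) (h : K[X]), h.natDegree ≤ n → h ≠ 0 → Odd h.natDegree →
      ∃ p : K[X], p.Monic ∧ Irreducible p ∧ Odd p.natDegree ∧ p ∣ h := by
  intro n
  induction n using Nat.strong_induction_on with
  | _ n ih =>
    intro h hn h0 hodd
    have hd1 : 1 ≤ h.natDegree := hodd.pos
    have hu : ¬ IsUnit h := by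
      intro hu
      rw [Polynomial.isUnit_iff] at hu
      obtain ⟨c, -, rfl⟩ := hu
      simp at hd1
    obtain ⟨p, hp, hpd⟩ := WfDvdMonoid.exists_irreducible_factor hu h0
    have hp0 : p ≠ 0 := hp.ne_zero
    -- make monic
    set q := p * C (p.leadingCoeff)⁻¹ with hq
    have hlc : IsUnit (C (p.leadingCoeff)⁻¹) := by
      rw [Polynomial.isUnit_C]
      exact (IsUnit.mk0 _ (inv_ne_zero (leadingCoeff_ne_zero.2 hp0)))
    have hassoc : Associated p q := ⟨hlc.unit, by simp [hq]⟩
    have hqmonic : q.Monic := monic_mul_leadingCoeff_inv hp0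
    have hqirr : Irreducible q := hassoc.irreducible hp
    have hqdvd : q ∣ h := hassoc.symm.dvd.trans hpd
    have hqdeg : q.natDegree = p.natDegree := by
      rw [hq, natDegree_mul hp0 hlc.ne_zero, natDegree_C, add_zero]
    by_cases hpodd : Odd q.natDegree
    · exact ⟨q, hqmonic, hqirr, hpodd, hqdvd⟩
    · obtain ⟨h2, rfl⟩ := hqdvd
      have h20 : h2 ≠ 0 := right_ne_zero_of_mul h0
      have hq0 : q ≠ 0 := hqirr.ne_zero
      have hdegs : q.natDegree + h2.natDegree = (q * h2).natDegree :=
        (natDegree_mul hq0 h20).symm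
      have hqpos : 1 ≤ q.natDegree := hqdeg ▸ hp.natDegree_pos
      have h2odd : Odd h2.natDegree := by
        rcases Nat.even_or_odd q.natDegree with he | ho
        · rcases Nat.even_or_odd h2.natDegree with he2 | ho2
          · rw [← hdegs, Nat.odd_add] at hodd; exact absurd (hodd.2 he2) (Nat.not_odd_iff_even.2 he)
          · exact ho2
        · exact absurd ho hpodd
      have h2lt : h2.natDegree < n := by omega
      obtain ⟨r, hr1, hr2, hr3, hr4⟩ := ih h2.natDegree h2lt h2 le_rfl h20 h2odd
      exact ⟨r, hr1, hr2, hr3, hr4.trans (dvd_mul_left _ _)⟩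

theorem lemA {K : Type*} [Field K] {ι : Type*} [Fintype ι] (a : ι → K)
    (ha : ∀ v : ι → K, v ≠ 0 → ∑ i, a i * v i ^ 2 ≠ 0) :
    ∀ (n D : ℕ) (f : K[X]) (g : ι → K[X]), Irreducible f → Odd f.natDegree →
      f.natDegree ≤ n → (∑ i, (g i).natDegree) ≤ D →
      (∀ i, (g i).degree < f.degree) → g ≠ 0 →
      ¬ f ∣ ∑ i, C (a i) * g i ^ 2 := by
  intro n
  induction n using Nat.strong_induction_on with
  | _ n ihn =>
  intro D
  induction D using Nat.strong_induction_on with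
  | _ D ihD =>
  intro f g hf hodd hn hD hdeg hg hdvd
  have hf0 : f ≠ 0 := hf.ne_zero
  have hfpos : 1 ≤ f.natDegree := hf.natDegree_pos
  obtain ⟨i0, hi0⟩ : ∃ i, g i ≠ 0 := by
    by_contra hc; push_neg at hc; exact hg (funext hc)
  by_cases hcomm : ∃ p : K[X], Irreducible p ∧ ∀ i, p ∣ g i
  · -- divide out a common irreducible factor
    obtain ⟨p, hp, hpall⟩ := hcomm
    have hp0 : p ≠ 0 := hp.ne_zero
    choose g' hg' using hpall
    have hgz : ∀ i, g i = 0 → g' i = 0 := fun i h => by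
      have h2 := (hg' i); rw [h] at h2
      exact (mul_eq_zero.1 h2.symm).resolve_left hp0
    have key : ∀ i, g i ≠ 0 → g' i ≠ 0 ∧ (g i).natDegree = p.natDegree + (g' i).natDegree := by
      intro i h
      have h' : g' i ≠ 0 := fun hz => h (by rw [hg' i, hz, mul_zero])
      exact ⟨h', by rw [hg' i, natDegree_mul hp0 h']⟩
    have hfp : ¬ f ∣ p := by
      intro hfp
      have h1 := Polynomial.degree_le_of_dvd hfp hp0
      have h2 := Polynomial.degree_le_of_dvd ⟨g' i0, hg' i0⟩ hi0
      exact absurd (h1.trans h2) (not_le.2 (hdeg i0))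
    have hdvdS' : f ∣ ∑ i, C (a i) * g' i ^ 2 := by
      have hS : (∑ i, C (a i) * g i ^ 2) = p ^ 2 * ∑ i, C (a i) * g' i ^ 2 := by
        rw [Finset.mul_sum]
        refine Finset.sum_congr rfl fun i _ => ?_
        rw [hg' i]; ring
      rw [hS] at hdvd
      rcases hf.prime.dvd_mul.1 hdvd with h | h
      · exact absurd (hf.prime.dvd_of_dvd_pow h) hfp
      · exact h
    have hdeg' : ∀ i, (g' i).degree < f.degree := fun i => by
      by_cases h : g i = 0
      · rw [hgz i h, Polynomial.degree_zero]
        exact bot_lt_iff_ne_bot.2 fun hb => hf0 (Polynomial.degree_eq_bot.1 hb)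
      · exact lt_of_le_of_lt (Polynomial.degree_le_of_dvd ⟨p, by rw [hg' i, mul_comm]⟩ h) (hdeg i)
    have hg'0 : g' ≠ 0 := fun h0 => (key i0 hi0).1 (congrFun h0 i0)
    have hsum : (∑ i, (g' i).natDegree) < ∑ i, (g i).natDegree := by
      refine Finset.sum_lt_sum (fun i _ => ?_) ⟨i0, Finset.mem_univ _, ?_⟩
      · by_cases h : g i = 0
        · rw [hgz i h, h]
        · rw [(key i h).2]; omega
      · rw [(key i0 hi0).2]
        have := hp.natDegree_pos; omega
    exact ihD _ (lt_of_lt_of_le hsum hD) f g' hf hodd hn le_rfl hdeg' hg'0 hdvdS'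
  · push_neg at hcomm
    set d := Finset.univ.sup (fun i => (g i).natDegree) with hd
    set S := ∑ i, C (a i) * g i ^ 2 with hS
    have hled : ∀ i, (g i).natDegree ≤ d := fun i => hd ▸ Finset.le_sup (f := fun i => (g i).natDegree) (Finset.mem_univ i)
    have hcoeffi : ∀ i, (g i ^ 2).coeff (2 * d) = ((g i).coeff d) ^ 2 := by
      intro i
      rcases lt_or_eq_of_le (hled i) with h | h
      · rw [Polynomial.coeff_eq_zero_of_natDegree_lt h,
          Polynomial.coeff_eq_zero_of_natDegree_lt
            (lt_of_le_of_lt (natDegree_pow_le) (by omega))]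
        ring
      · rw [← h, sq, two_mul, Polynomial.coeff_mul_degree_add_degree, ← Polynomial.coeff_natDegree, sq]
    have hvne : (fun i => (g i).coeff d) ≠ 0 := by
      intro h0
      haveI : Nonempty ι := ⟨i0⟩
      obtain ⟨i1, -, hi1⟩ := Finset.exists_mem_eq_sup Finset.univ Finset.univ_nonempty
        (fun i => (g i).natDegree)
      by_cases hz : g i1 = 0
      · have hd0 : d = 0 := by rw [← hd] at hi1; rw [hi1, hz, natDegree_zero]
        obtain ⟨c, hc⟩ := Polynomial.natDegree_eq_zero.1
          (le_antisymm (hd0 ▸ hled i0) (Nat.zero_le _))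
        have h00 := congrFun h0 i0
        simp only [Pi.zero_apply, hd0] at h00
        rw [← hc, Polynomial.coeff_C_zero] at h00
        exact hi0 (by rw [← hc, h00, map_zero])
      · have := congrFun h0 i1
        simp only [Pi.zero_apply] at this
        rw [← hd] at hi1
        rw [hi1, Polynomial.coeff_natDegree] at this
        exact hz (leadingCoeff_eq_zero.1 this)
    have hSc : S.coeff (2 * d) = ∑ i, a i * ((g i).coeff d) ^ 2 := by
      rw [hS, Polynomial.finset_sum_coeff]
      exact Finset.sum_congr rfl fun i _ => by rw [Polynomial.coeff_C_mul, hcoeffi i]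
    have hc0 : S.coeff (2 * d) ≠ 0 := by rw [hSc]; exact ha _ hvne
    have hS0 : S ≠ 0 := fun h => hc0 (by rw [h, Polynomial.coeff_zero])
    have hup : S.natDegree ≤ 2 * d := by
      rw [hS]
      refine Polynomial.natDegree_sum_le_of_forall_le _ _ fun i _ => ?_
      refine le_trans (Polynomial.natDegree_C_mul_le _ _) (le_trans natDegree_pow_le (by have := hled i; omega))
    have hSdeg : S.natDegree = 2 * d := le_antisymm hup (Polynomial.le_natDegree_of_ne_zero hc0)
    obtain ⟨h, hh⟩ := hdvd
    have hh0 : h ≠ 0 := fun h0 => hS0 (by rw [hh, h0, mul_zero])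
    have hmt : f.natDegree + h.natDegree = 2 * d := by
      rw [← hSdeg, hh, natDegree_mul hf0 hh0]
    have hdlt : d < f.natDegree := by
      have hlt : ∀ i, (g i).natDegree < f.natDegree := fun i => by
        by_cases hz : g i = 0
        · rw [hz, natDegree_zero]; omega
        · exact Polynomial.natDegree_lt_natDegree hz (hdeg i)
      exact (Finset.sup_lt_iff (by simp only [Nat.bot_eq_zero]; omega : (⊥ : ℕ) < f.natDegree)).2 fun i _ => hlt i
    have hth : Odd h.natDegree := by
      obtain ⟨u, hu⟩ := hodd
      rcases Nat.even_or_odd h.natDegree with ⟨w, hw⟩ | ho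
      · omega
      · exact ho
    obtain ⟨p, hpmon, hpirr, hpodd, hpdvd⟩ := oddFactor h.natDegree h le_rfl hh0 hth
    have hplt : p.natDegree < n := by
      have h1 : p.natDegree ≤ h.natDegree := Polynomial.natDegree_le_of_dvd hpdvd hh0
      omega
    obtain ⟨i1, hi1⟩ := hcomm p hpirr
    set g2 := fun i => g i %ₘ p with hg2
    have hdeg2 : ∀ i, (g2 i).degree < p.degree := fun i => Polynomial.degree_modByMonic_lt _ hpmon
    have hg20 : g2 ≠ 0 := by
      intro h0
      exact hi1 ((Polynomial.modByMonic_eq_zero_iff_dvd hpmon).1 (by simpa using congrFun h0 i1))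
    have hpdvdS2 : p ∣ ∑ i, C (a i) * g2 i ^ 2 := by
      have h1 : p ∣ S := hh ▸ Dvd.dvd.mul_left hpdvd f
      have h2 : p ∣ S - ∑ i, C (a i) * g2 i ^ 2 := by
        rw [hS, ← Finset.sum_sub_distrib]
        refine Finset.dvd_sum fun i _ => ?_
        have hdv : p ∣ g i - g2 i :=
          ⟨g i /ₘ p, by
            have := Polynomial.modByMonic_add_div (g i) p
            rw [hg2]; linear_combination -this⟩
        have hre : C (a i) * g i ^ 2 - C (a i) * g2 i ^ 2
            = ((g i - g2 i) * (g i + g2 i)) * C (a i) := by ring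
        rw [hre]
        exact (hdv.mul_right _).mul_right _
      have h3 := dvd_sub h1 h2
      rwa [sub_sub_cancel] at h3
    exact ihn p.natDegree hplt (∑ i, (g2 i).natDegree) p g2 hpirr hpodd le_rfl le_rfl hdeg2 hg20 hpdvdS2

theorem lemB {K L : Type*} [Field K] [Field L] [Algebra K L] {ι : Type*} [Fintype ι]
    (α : L) (hint : IsIntegral K α) (hodd : Odd (minpoly K α).natDegree)
    (a : ι → K) (ha : ∀ v : ι → K, v ≠ 0 → ∑ i, a i * v i ^ 2 ≠ 0)
    (x : ι → K⟮α⟯) (hx : x ≠ 0) :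
    ∑ i, algebraMap K K⟮α⟯ (a i) * x i ^ 2 ≠ 0 := by
  intro hsum
  set pb := IntermediateField.adjoin.powerBasis hint with hpb
  have hgen : pb.gen = IntermediateField.AdjoinSimple.gen K α := rfl
  have hdim : pb.dim = (minpoly K α).natDegree := rfl
  choose g hgdeg hgx using fun i => pb.exists_eq_aeval (x i)
  have hirr : Irreducible (minpoly K α) := minpoly.irreducible hint
  have hf0 : minpoly K α ≠ 0 := hirr.ne_zero
  have haev : (aeval pb.gen) (∑ i, C (a i) * g i ^ 2) = 0 := by
    rw [map_sum]
    rw [← hsum]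
    refine Finset.sum_congr rfl fun i _ => ?_
    rw [map_mul, map_pow, aeval_C, ← hgx i]
  have hdvd : minpoly K α ∣ ∑ i, C (a i) * g i ^ 2 := by
    have := minpoly.dvd K pb.gen haev
    rwa [hgen, IntermediateField.minpoly_gen] at this
  refine lemA a ha (minpoly K α).natDegree _ (minpoly K α) g hirr hodd le_rfl le_rfl
    (fun i => ?_) (fun h0 => ?_) hdvd
  · by_cases h : g i = 0
    · rw [h, Polynomial.degree_zero]
      exact bot_lt_iff_ne_bot.2 fun hb => hf0 (Polynomial.degree_eq_bot.1 hb)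
    · rw [Polynomial.degree_eq_natDegree h, Polynomial.degree_eq_natDegree hf0]
      exact_mod_cast (hdim ▸ hgdeg i)
  · obtain ⟨i, hi⟩ : ∃ i, x i ≠ 0 := by
      by_contra hc; push_neg at hc; exact hx (funext hc)
    apply hi
    have h00 := congrFun h0 i
    simp only [Pi.zero_apply] at h00
    rw [hgx i, h00, map_zero]

theorem lemC {ι : Type*} [Fintype ι] :
    ∀ (n : ℕ) (K F : Type v) (_ : Field K) (_ : Field F) (_ : Algebra K F)
      (_ : FiniteDimensional K F), Odd (finrank K F) → finrank K F ≤ n →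
      ∀ (a : ι → K), (∀ v : ι → K, v ≠ 0 → ∑ i, a i * v i ^ 2 ≠ 0) →
      ∀ x : ι → F, x ≠ 0 → ∑ i, algebraMap K F (a i) * x i ^ 2 ≠ 0 := by
  intro n
  induction n using Nat.strong_induction_on with
  | _ n ih =>
  intro K F _ _ _ _ hodd hn a ha x hx hsum
  by_cases h1 : finrank K F = 1
  · have hbot : (⊥ : Subalgebra K F) = ⊤ := Subalgebra.bot_eq_top_iff_finrank_eq_one.2 h1
    have hmem : ∀ y : F, ∃ c : K, algebraMap K F c = y := fun y => by
      have : y ∈ (⊥ : Subalgebra K F) := hbot.symm ▸ Algebra.mem_top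
      exact Algebra.mem_bot.1 this
    choose v hv using fun i => hmem (x i)
    have hvne : v ≠ 0 := by
      intro h0
      apply hx
      funext i
      have h00 := congrFun h0 i
      simp only [Pi.zero_apply] at h00
      simp only [Pi.zero_apply]
      rw [← hv i, h00, map_zero]
    apply (RingHom.injective (algebraMap K F)).ne (ha v hvne)
    rw [map_sum, map_zero, ← hsum]
    refine Finset.sum_congr rfl fun i _ => by rw [map_mul, map_pow, hv i]
  · -- find α not in the base
    have hα : ∃ α : F, α ∉ (⊥ : Subalgebra K F) := by
      by_contra hc
      push_neg at hc
      exact h1 (Subalgebra.bot_eq_top_iff_finrank_eq_one.1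
        (eq_top_iff.2 fun y _ => hc y))
    obtain ⟨α, hα⟩ := hα
    have hint : IsIntegral K α := IsIntegral.of_finite K α
    set K' := K⟮α⟯ with hK'
    haveI : FiniteDimensional K' F := FiniteDimensional.right K K' F
    have htower : finrank K K' * finrank K' F = finrank K F := finrank_mul_finrank K K' F
    have hodd1 : Odd (finrank K K') ∧ Odd (finrank K' F) := by
      rw [← htower] at hodd
      exact (Nat.odd_mul.1 hodd)
    have hKne : finrank K K' ≠ 1 := by
      intro hone
      rw [IntermediateField.finrank_eq_one_iff] at hone
      apply hα
      have : α ∈ K' := IntermediateField.mem_adjoin_simple_self K α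
      rw [hone, IntermediateField.mem_bot] at this
      obtain ⟨c, hc⟩ := this
      exact ⟨c, hc⟩
    have hlt : finrank K' F < n := by
      have h2 : 2 ≤ finrank K K' := by
        have := finrank_pos (R := K) (M := K')
        omega
      have := finrank_pos (R := K') (M := F)
      nlinarith [htower, hn]
    have hminodd : Odd (minpoly K α).natDegree := by
      rw [← IntermediateField.adjoin.finrank hint]
      exact hodd1.1
    -- anisotropic over K'
    have ha' : ∀ v : ι → K', v ≠ 0 → ∑ i, algebraMap K K' (a i) * v i ^ 2 ≠ 0 :=
      fun v hv => lemB α hint hminodd a ha v hv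
    have := ih (finrank K' F) hlt (↥K') F _ _ _ this hodd1.2 le_rfl
      (fun i => algebraMap K K' (a i)) ha' x hx
    apply this
    rw [← hsum]
    refine Finset.sum_congr rfl fun i _ => ?_
    rw [← IsScalarTower.algebraMap_apply]


theorem diagSum {R M : Type*} [CommRing R] [AddCommGroup M] [Module R M]
    (Q : QuadraticForm R M) {ι : Type*} (s : Finset ι) (c : ι → R) (m : ι → M)
    (horth : ∀ i j, i ≠ j → QuadraticMap.polar Q (m i) (m j) = 0) :
    Q (∑ i ∈ s, c i • m i) = ∑ i ∈ s, (c i * c i) * Q (m i) := by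
  induction s using Finset.cons_induction with
  | empty => simp
  | cons a s ha ih =>
    rw [Finset.sum_cons, Finset.sum_cons, QuadraticMap.map_add (⇑Q), ih]
    have hp : QuadraticMap.polar Q (c a • m a) (∑ i ∈ s, c i • m i) = 0 := by
      rw [show QuadraticMap.polar (⇑Q) (c a • m a) (∑ i ∈ s, c i • m i)
          = (QuadraticMap.polarBilin Q (c a • m a)) (∑ i ∈ s, c i • m i) from rfl,
        map_sum]
      refine Finset.sum_eq_zero fun i hi => ?_
      show QuadraticMap.polar (⇑Q) (c a • m a) (c i • m i) = 0
      rw [QuadraticMap.polar_smul_left, QuadraticMap.polar_smul_right,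
        horth a i (by rintro rfl; exact ha hi), smul_zero, smul_zero]
    rw [hp, QuadraticMap.map_smul, smul_eq_mul, add_zero]

open scoped TensorProduct

/-- Springer's theorem: let `q` be a quadratic form over a field `k` of
characteristic `≠ 2` and `E/k` a finite field extension of odd degree.  Then `q` is
isotropic over `E` if and only if it is isotropic over `k`. -/
theorem stmt_3 (k E V : Type*) [Field k] [Invertible (2 : k)] [Field E] [Algebra k E]
    [FiniteDimensional k E] (hodd : Odd (Module.finrank k E))
    [AddCommGroup V] [Module k V] [FiniteDimensional k V]
    (q : QuadraticForm k V) :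
    (∃ w : E ⊗[k] V, w ≠ 0 ∧ q.baseChange E w = 0) ↔ ∃ v : V, v ≠ 0 ∧ q v = 0 := by
  haveI : Invertible (2 : E) :=
    (Invertible.map (algebraMap k E) (2 : k)).copy 2 (map_ofNat _ 2).symm
  constructor
  · rintro ⟨w, hw, hQw⟩
    by_contra hk
    push_neg at hk
    obtain ⟨b, hb⟩ := LinearMap.BilinForm.exists_orthogonal_basis
      (LinearMap.BilinForm.isSymm_iff.1 (LinearMap.BilinForm.isSymm_def.2 (QuadraticMap.associated_isSymm k q)))
    have hpolar : ∀ i j, i ≠ j → QuadraticMap.polar q (b i) (b j) = 0 := by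
      intro i j hij
      have h2 : (((QuadraticMap.associatedHom k) q) (b i)) (b j) = 0 := hb hij
      have h5 := congrArg (fun B : LinearMap.BilinForm k V => (B (b i)) (b j))
        (QuadraticMap.two_nsmul_associated k q)
      simp only [LinearMap.smul_apply] at h5
      rw [← QuadraticMap.polarBilin_apply_apply, ← h5, h2, smul_zero]
    -- anisotropy in coordinates over k
    have haK : ∀ v : Fin (Module.finrank k V) → k, v ≠ 0 → ∑ i, q (b i) * v i ^ 2 ≠ 0 := by
      intro v hv
      have hvecne : (∑ i, v i • b i) ≠ 0 := by
        intro h0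
        apply hv
        have h1 : v = ⇑(b.repr (0 : V)) := by rw [← h0, Basis.repr_sum_self]
        rw [map_zero] at h1
        simpa using h1
      intro hs
      apply hk _ hvecne
      rw [diagSum q Finset.univ v b hpolar, ← hs]
      exact Finset.sum_congr rfl fun i _ => by ring
    -- coordinates over E
    set b' := b.baseChange E with hb'
    set x : Fin (Module.finrank k V) → E := fun i => b'.repr w i with hxdef
    have hxne : x ≠ 0 := by
      intro h0
      apply hw
      have h1 := (b'.sum_repr w).symm
      rw [h1]
      refine Finset.sum_eq_zero fun i _ => ?_
      have := congrFun h0 i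
      simp only [hxdef, Pi.zero_apply] at this
      rw [this, zero_smul]
    have horthE : ∀ i j, i ≠ j →
        QuadraticMap.polar (q.baseChange E) (b' i) (b' j) = 0 := by
      intro i j hij
      rw [show QuadraticMap.polar (⇑(q.baseChange E)) (b' i) (b' j)
          = (QuadraticMap.polarBilin (q.baseChange E) (b' i)) (b' j) from rfl,
        QuadraticForm.polarBilin_baseChange, hb', Basis.baseChange_apply,
        Basis.baseChange_apply, LinearMap.BilinForm.baseChange_tmul]
      have : (QuadraticMap.polarBilin q (b i)) (b j) = 0 := hpolar i j hij
      rw [this, zero_smul]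
    have hQsum : ∑ i, (x i * x i) * (algebraMap k E (q (b i))) = 0 := by
      rw [← hQw]
      conv_rhs => rw [← b'.sum_repr w]
      rw [diagSum (q.baseChange E) Finset.univ x (fun i => b' i) horthE]
      refine Finset.sum_congr rfl fun i _ => ?_
      rw [hb', Basis.baseChange_apply, QuadraticForm.baseChange_tmul, Algebra.smul_def]
      ring
    -- transfer to the bottom intermediate field
    set K0 := (⊥ : IntermediateField k E) with hK0
    haveI : FiniteDimensional K0 E := FiniteDimensional.right k K0 E
    set e := IntermediateField.botEquiv k E with he
    have hfr : Module.finrank K0 E = Module.finrank k E := by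
      have h1 := Module.finrank_mul_finrank k K0 E
      rw [IntermediateField.finrank_bot, one_mul] at h1
      exact h1
    set a0 : Fin (Module.finrank k V) → K0 := fun i => e.symm (q (b i)) with ha0def
    have hmapa0 : ∀ i, algebraMap K0 E (a0 i) = algebraMap k E (q (b i)) := by
      intro i
      have h1 : (a0 i) = algebraMap k K0 (q (b i)) := by
        rw [ha0def]
        have h2 := e.symm.commutes (q (b i))
        rwa [Algebra.algebraMap_self, RingHom.id_apply] at h2
      rw [h1, ← IsScalarTower.algebraMap_apply]
    have ha0 : ∀ v : Fin (Module.finrank k V) → K0, v ≠ 0 →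
        ∑ i, a0 i * v i ^ 2 ≠ 0 := by
      intro v hv hs
      apply haK (fun i => e (v i))
      · intro h0
        apply hv
        funext i
        have h9 := congrFun h0 i
        simp only [Pi.zero_apply] at h9 ⊢
        exact e.injective (by rw [h9, map_zero])
      · have h1 := congrArg e hs
        rw [map_sum, map_zero] at h1
        rw [← h1]
        refine Finset.sum_congr rfl fun i _ => ?_
        rw [map_mul, map_pow, ha0def, AlgEquiv.apply_symm_apply]
    refine lemC (Module.finrank K0 E) (↥K0) E _ _ _ this (hfr ▸ hodd) le_rfl a0 ha0 x hxne ?_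
    rw [← hQsum]
    refine Finset.sum_congr rfl fun i _ => by rw [hmapa0 i]; ring
  · rintro ⟨v, hv, hqv⟩
    refine ⟨(1 : E) ⊗ₜ[k] v, ?_, ?_⟩
    · intro h0
      set b := Module.finBasis k V with hbdef
      have hrep : (1 : E) ⊗ₜ[k] v = ∑ i, algebraMap k E (b.repr v i) • (b.baseChange E) i := by
        conv_lhs => rw [← b.sum_repr v]
        rw [TensorProduct.tmul_sum]
        refine Finset.sum_congr rfl fun i _ => ?_
        rw [Basis.baseChange_apply, TensorProduct.tmul_smul, algebraMap_smul]
      apply hv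
      have h1 : ∀ i, algebraMap k E (b.repr v i) = 0 := by
        intro i
        have h2 : (fun i => algebraMap k E ((b.repr v) i))
            = ⇑((b.baseChange E).repr (0 : E ⊗[k] V)) := by
          rw [← Basis.repr_sum_self (b.baseChange E)
            (fun i => algebraMap k E ((b.repr v) i)), ← hrep, h0]
        rw [map_zero] at h2
        have h3 := congrFun h2 i
        simpa using h3
      have h3 : b.repr v = 0 := by
        ext i
        exact (algebraMap k E).injective (by rw [h1 i]; simp)
      have := congrArg (b.repr.symm) h3
      simpa using this
    · rw [QuadraticForm.baseChange_tmul, hqv, zero_smul]
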